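/- Let (M^n, g) be a compact oriented Riemannian manifold, X a vector field satisfying (1/2)L_X g = 2(n-1)(σ - λ)g, with Hodge–de Rham decomposition X = ∇h + Y, div Y = 0. Then (1/2)L_Y g = 2(n-1)(σ - λ)g - Hess h, and (1/4)∫_M |L_Y g|² dv_g = ∫_M [ |Hess h|² - 4n(n-1)²(σ - λ)² ] dv_g. -/
import Mathlib


open MeasureTheory Finset

/-- Compact oriented Riemannian manifold, soliton equation
`(1/2) L_X g = 2(n-1)(σ-λ) g`, Hodge–de Rham decomposition `X = ∇h + Y`, `div Y = 0`.
Then `(1/2) L_Y g = 2(n-1)(σ-λ) g - Hess h` and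
`(1/4) ∫ |L_Y g|² = ∫ [ |Hess h|² - 4n(n-1)²(σ-λ)² ]`.
Written in an orthonormal frame; `L_X g = L_{∇h} g + L_Y g`, `L_{∇h} g = 2 Hess h`,
and `tr Hess h = Δh = 2n(n-1)(σ-λ)` (since `div Y = 0`) are hypotheses. -/
theorem stmt9 {M : Type*} [MeasurableSpace M] (μ : Measure M)
    (n : ℕ) (σ h : M → ℝ)
    (LXg LYg Lhg Hessh g₀ : M → Fin n → Fin n → ℝ) (lam : ℝ)
    -- soliton equation (1/2) L_X g = 2(n-1)(σ-λ) g: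
    (hsol : ∀ x i j, (1 / 2) * LXg x i j = 2 * ((n : ℝ) - 1) * (σ x - lam) * g₀ x i j)
    -- orthonormal frame:
    (hframe : ∀ x i j, g₀ x i j = if i = j then 1 else 0)
    -- additivity of the Lie derivative along X = ∇h + Y:
    (hadd : ∀ x i j, LXg x i j = Lhg x i j + LYg x i j)
    -- L_{∇h} g = 2 Hess h:
    (hLh : ∀ x i j, Lhg x i j = 2 * Hessh x i j)
    -- trace identity Δh = tr_g Hess h = 2n(n-1)(σ-λ)  (using div Y = 0):
    (htr : ∀ x, ∑ i, Hessh x i i = 2 * (n : ℝ) * ((n : ℝ) - 1) * (σ x - lam)) :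
    (∀ x i j, (1 / 2) * LYg x i j
        = 2 * ((n : ℝ) - 1) * (σ x - lam) * g₀ x i j - Hessh x i j) ∧
      (1 / 4) * ∫ x, (∑ i, ∑ j, (LYg x i j) ^ 2) ∂μ
        = ∫ x, ((∑ i, ∑ j, (Hessh x i j) ^ 2)
            - 4 * (n : ℝ) * ((n : ℝ) - 1) ^ 2 * (σ x - lam) ^ 2) ∂μ := by
  have hY : ∀ x i j, LYg x i j
      = 2 * (2 * ((n : ℝ) - 1) * (σ x - lam) * g₀ x i j - Hessh x i j) := by
    intro x i j
    have h1 := hsol x i j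
    have h2 := hadd x i j
    have h3 := hLh x i j
    linarith
  constructor
  · intro x i j
    have := hY x i j
    linarith
  · have key : ∀ x, ((∑ i, ∑ j, (Hessh x i j) ^ 2)
        - 4 * (n : ℝ) * ((n : ℝ) - 1) ^ 2 * (σ x - lam) ^ 2)
        = (1 / 4) * (∑ i, ∑ j, (LYg x i j) ^ 2) := by
      intro x
      set a : ℝ := 2 * ((n : ℝ) - 1) * (σ x - lam) with ha
      have expand : ∀ i j, (LYg x i j) ^ 2
          = 4 * (a ^ 2 * (g₀ x i j) ^ 2 - 2 * a * (g₀ x i j * Hessh x i j)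
              + (Hessh x i j) ^ 2) := by
        intro i j; rw [hY x i j]; ring
      have s1 : ∑ i, ∑ j, (g₀ x i j) ^ 2 = (n : ℝ) := by
        simp [hframe]
      have s2 : ∑ i, ∑ j, g₀ x i j * Hessh x i j = ∑ i, Hessh x i i := by
        refine Finset.sum_congr rfl fun i _ => ?_
        simp [hframe]
      have hsum : ∑ i, ∑ j, (LYg x i j) ^ 2
          = 4 * (a ^ 2 * (∑ i, ∑ j, (g₀ x i j) ^ 2)
              - 2 * a * (∑ i, ∑ j, g₀ x i j * Hessh x i j)
              + ∑ i, ∑ j, (Hessh x i j) ^ 2) := by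
        simp only [expand, Finset.mul_sum, Finset.sum_sub_distrib, Finset.sum_add_distrib,
          mul_add, mul_sub]
      rw [hsum, s1, s2, htr x]
      ring
    rw [MeasureTheory.integral_congr_ae (Filter.Eventually.of_forall key),
      MeasureTheory.integral_const_mul]
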